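/- Fix integers n ≥ 1 and 0 ≤ θ_1 < θ_2 ≤ n-1. Define G_B(p) = F_B(θ_2; n, p) - F_B(θ_1; n, p) for p ∈ (0,1), where F_B is the Binomial(n,p) CDF. Then G_B'(p) = p^{θ_1}(1-p)^{n-θ_2-1}[(n-θ_1)C(n,θ_1)(1-p)^{θ_2-θ_1} - (n-θ_2)C(n,θ_2)p^{θ_2-θ_1}]. -/

import Mathlib

open Finset

private lemma term_deriv (n c i m : ℕ) (p : ℝ) :
    HasDerivAt (fun x : ℝ => (c : ℝ) * x ^ i * (1 - x) ^ m)
      ((c : ℝ) * ((i : ℝ) * p ^ (i - 1) * (1 - p) ^ m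
        - (m : ℝ) * p ^ i * (1 - p) ^ (m - 1))) p := by
  have h1 : HasDerivAt (fun x : ℝ => x ^ i) ((i : ℝ) * p ^ (i - 1)) p := hasDerivAt_pow i p
  have h2 : HasDerivAt (fun x : ℝ => (1 - x) ^ m)
      ((m : ℝ) * (1 - p) ^ (m - 1) * (-1)) p :=
    (((hasDerivAt_id p).const_sub 1)).pow m
  have := ((h1.const_mul (c : ℝ)).fun_mul h2)
  refine this.congr_deriv (Eq.symm ?_)
  ring

private lemma key_deriv (n : ℕ) (p : ℝ) : ∀ θ : ℕ, θ < n →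
    HasDerivAt (fun x : ℝ => ∑ i ∈ Finset.range (θ + 1),
        (n.choose i : ℝ) * x ^ i * (1 - x) ^ (n - i))
      (-(((n - θ : ℕ) : ℝ) * (n.choose θ : ℝ) * p ^ θ * (1 - p) ^ (n - θ - 1))) p := by
  intro θ
  induction θ with
  | zero =>
    intro h
    have := term_deriv n (n.choose 0) 0 (n - 0) p
    have heq : (fun x : ℝ => ∑ i ∈ Finset.range (0 + 1),
        (n.choose i : ℝ) * x ^ i * (1 - x) ^ (n - i))
        = fun x : ℝ => (n.choose 0 : ℝ) * x ^ 0 * (1 - x) ^ (n - 0) := by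
      funext x; simp
    rw [heq]
    convert this using 1
    simp
  | succ θ ih =>
    intro h
    have hθ : θ < n := Nat.lt_of_succ_lt h
    have hd := (ih hθ).add (term_deriv n (n.choose (θ + 1)) (θ + 1) (n - (θ + 1)) p)
    have heq : (fun x : ℝ => ∑ i ∈ Finset.range (θ + 1 + 1),
        (n.choose i : ℝ) * x ^ i * (1 - x) ^ (n - i))
        = fun x : ℝ => (∑ i ∈ Finset.range (θ + 1),
            (n.choose i : ℝ) * x ^ i * (1 - x) ^ (n - i))
          + (n.choose (θ + 1) : ℝ) * x ^ (θ + 1) * (1 - x) ^ (n - (θ + 1)) := by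
      funext x; rw [Finset.sum_range_succ]
    rw [heq]
    refine hd.congr_deriv (Eq.symm ?_)
    -- arithmetic identity
    obtain ⟨k, hk⟩ : ∃ k, n - θ = k + 2 := ⟨n - θ - 2, by omega⟩
    have e1 : n - θ - 1 = k + 1 := by omega
    have e2 : n - (θ + 1) = k + 1 := by omega
    have e3 : n - (θ + 1) - 1 = k := by omega
    have e4 : (θ + 1) - 1 = θ := by omega
    have hB : (n.choose (θ + 1) : ℝ) * ((θ : ℝ) + 1) = (n.choose θ : ℝ) * ((k : ℝ) + 2) := by
      have := Nat.choose_succ_right_eq n θ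
      have h2 : n.choose (θ + 1) * (θ + 1) = n.choose θ * (k + 2) := by rw [this, hk]
      exact_mod_cast h2
    simp only [hk, e2, e4, Nat.add_sub_cancel, show k + 2 - 1 = k + 1 from rfl,
      show k + 1 - 1 = k from rfl]
    push_cast
    linear_combination (-(p ^ θ * (1 - p) ^ (k + 1))) * hB

theorem stmt7 (n θ1 θ2 : ℕ) (hn : 1 ≤ n) (h1 : θ1 < θ2) (h2 : θ2 ≤ n - 1) (p : ℝ)
    (hp : p ∈ Set.Ioo (0 : ℝ) 1) :
    HasDerivAt
      (fun x : ℝ =>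
        (∑ i ∈ Finset.range (θ2 + 1), (n.choose i : ℝ) * x ^ i * (1 - x) ^ (n - i)) -
          ∑ i ∈ Finset.range (θ1 + 1), (n.choose i : ℝ) * x ^ i * (1 - x) ^ (n - i))
      (p ^ θ1 * (1 - p) ^ (n - θ2 - 1) *
        (((n : ℝ) - θ1) * (n.choose θ1 : ℝ) * (1 - p) ^ (θ2 - θ1) -
          ((n : ℝ) - θ2) * (n.choose θ2 : ℝ) * p ^ (θ2 - θ1))) p := by
  have hθ2 : θ2 < n := by omega
  have hθ1 : θ1 < n := by omega
  have hd := (key_deriv n p θ2 hθ2).sub (key_deriv n p θ1 hθ1)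
  refine hd.congr_deriv (Eq.symm ?_)
  have e1 : θ2 = θ1 + (θ2 - θ1) := by omega
  have e2 : n - θ1 - 1 = (n - θ2 - 1) + (θ2 - θ1) := by omega
  rw [Nat.cast_sub hθ2.le, Nat.cast_sub hθ1.le]
  rw [show p ^ θ2 = p ^ θ1 * p ^ (θ2 - θ1) by rw [← pow_add, ← e1]]
  rw [show (1 - p) ^ (n - θ1 - 1) = (1 - p) ^ (n - θ2 - 1) * (1 - p) ^ (θ2 - θ1) by
    rw [← pow_add, ← e2]]
  ring
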